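/- Let δ > 0, c > 0, let û : ℝ → ℝ be continuous, and let λ ∈ ℂ with Im λ ≠ 0. Define μ₋ᵘ(λ) := (−c + (c² + 4δ(λ+1))^{1/2})/(2δ) and μ₊ˢ(λ) := (−c − (c² + 4δ(λ−1))^{1/2})/(2δ), using the principal square root. Then there is no differentiable function η : ℝ → ℂ satisfying the F-KPP Riccati equation η'(z) = (λ − 1 + 2û(z))/δ − (c/δ)η(z) − η(z)² for all z ∈ ℝ together with lim_{z→−∞} η(z) = μ₋ᵘ(λ) and lim_{z→+∞} η(z) = μ₊ˢ(λ). In other words, the linearised F-KPP operator about a travelling wave has no eigenvalues with nonzero imaginary part. -/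

import Mathlib

open Filter

lemma im_cpow_half_pos {w : ℂ} (hw : 0 < w.im) : 0 < (w ^ ((1:ℂ)/2)).im := by
  have hw0 : w ≠ 0 := by intro h; simp [h] at hw
  rw [Complex.cpow_def_of_ne_zero hw0, Complex.exp_im]
  have harg : 0 < w.arg := by
    rcases lt_or_eq_of_le (Complex.arg_nonneg_iff.2 hw.le) with h | h
    · exact h
    · exact absurd (Complex.arg_eq_zero_iff.1 h.symm).2 hw.ne'
  have him : (Complex.log w * ((1:ℂ)/2)).im = w.arg / 2 := by
    simp [Complex.mul_im, Complex.log_im, Complex.log_re]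
    ring
  rw [him]
  have h2 : w.arg / 2 < Real.pi := by
    have := Complex.arg_le_pi w
    nlinarith [Real.pi_pos]
  exact mul_pos (Real.exp_pos _) (Real.sin_pos_of_pos_of_lt_pi (by positivity) h2)

lemma im_cpow_half_neg {w : ℂ} (hw : w.im < 0) : (w ^ ((1:ℂ)/2)).im < 0 := by
  have hw0 : w ≠ 0 := by intro h; simp [h] at hw
  rw [Complex.cpow_def_of_ne_zero hw0, Complex.exp_im]
  have harg : w.arg < 0 := Complex.arg_neg_iff.2 hw
  have him : (Complex.log w * ((1:ℂ)/2)).im = w.arg / 2 := by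
    simp [Complex.mul_im, Complex.log_im, Complex.log_re]
    ring
  rw [him]
  have h2 : -Real.pi < w.arg := Complex.neg_pi_lt_arg w
  have hs : Real.sin (w.arg / 2) < 0 := by
    have : 0 < Real.sin (-(w.arg / 2)) :=
      Real.sin_pos_of_pos_of_lt_pi (by linarith) (by linarith [Real.pi_pos])
    rw [Real.sin_neg] at this; linarith
  exact mul_neg_of_pos_of_neg (Real.exp_pos _) hs

/-- Crossing lemma: a real function with positive derivative at every zero
cannot go from a positive limit at `-∞` to a negative limit at `+∞`. -/
lemma no_crossing (v g : ℝ → ℝ) (hd : ∀ z, HasDerivAt v (g z) z)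
    (hg : ∀ z, v z = 0 → 0 < g z) (L₁ L₂ : ℝ) (h1 : 0 < L₁) (h2 : L₂ < 0)
    (hb : Tendsto v atBot (nhds L₁)) (ht : Tendsto v atTop (nhds L₂)) : False := by
  have hcont : Continuous v := by
    have : Differentiable ℝ v := fun z => (hd z).differentiableAt
    exact this.continuous
  -- a point where v > 0
  obtain ⟨z₀, hz₀⟩ : ∃ z₀, 0 < v z₀ :=
    (hb.eventually (eventually_gt_nhds h1)).exists
  -- a point z₁ > z₀ where v < 0
  obtain ⟨z₁, hz₁, hz₀₁⟩ : ∃ z₁, v z₁ < 0 ∧ z₀ < z₁ := by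
    have := (ht.eventually (eventually_lt_nhds h2)).and (eventually_gt_atTop z₀)
    exact this.exists
  set S : Set ℝ := {t ∈ Set.Icc z₀ z₁ | v t = 0} with hS
  have hSne : S.Nonempty := by
    have h0 : (0:ℝ) ∈ Set.Icc (v z₁) (v z₀) := ⟨hz₁.le, hz₀.le⟩
    obtain ⟨t, ht', hvt⟩ := intermediate_value_Icc' hz₀₁.le hcont.continuousOn h0
    exact ⟨t, ht', hvt⟩
  have hSclosed : IsClosed S :=
    (isClosed_Icc.inter (isClosed_eq hcont continuous_const))
  have hScomp : IsCompact S :=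
    (isCompact_Icc).of_isClosed_subset hSclosed (fun t ht => ht.1)
  set z₂ := sSup S with hz₂def
  have hz₂S : z₂ ∈ S := hScomp.sSup_mem hSne
  have hz₂v : v z₂ = 0 := hz₂S.2
  have hz₂lt : z₂ < z₁ := lt_of_le_of_ne hz₂S.1.2 (fun h => hz₁.ne (h ▸ hz₂v))
  have hgpos := hg z₂ hz₂v
  -- find t in (z₂, z₁) with v t > 0 using the derivative
  have hslope : Tendsto (slope v z₂) (nhdsWithin z₂ {z₂}ᶜ) (nhds (g z₂)) :=
    hasDerivAt_iff_tendsto_slope.1 (hd z₂)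
  have hslope' : Tendsto (slope v z₂) (nhdsWithin z₂ (Set.Ioi z₂)) (nhds (g z₂)) :=
    hslope.mono_left (nhdsWithin_mono _ (fun x hx => ne_of_gt hx))
  have hev : ∀ᶠ t in nhdsWithin z₂ (Set.Ioi z₂), 0 < slope v z₂ t :=
    hslope'.eventually (eventually_gt_nhds hgpos)
  have hmem : Set.Ioo z₂ z₁ ∈ nhdsWithin z₂ (Set.Ioi z₂) :=
    Ioo_mem_nhdsGT_of_mem ⟨le_refl _, hz₂lt⟩
  obtain ⟨t, hts, htm⟩ := (hev.and (eventually_of_mem hmem (fun x hx => hx))).exists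
  have ht1 : z₂ < t := htm.1
  have ht2 : t < z₁ := htm.2
  have hvt : 0 < v t := by
    have heq : slope v z₂ t = v t / (t - z₂) := by
      rw [slope_def_field, hz₂v, sub_zero]
    rw [heq] at hts
    have hpos : 0 < t - z₂ := sub_pos.2 ht1
    have := mul_pos hts hpos
    rwa [div_mul_cancel₀ _ hpos.ne'] at this
  -- IVT on [t, z₁]
  have h0' : (0:ℝ) ∈ Set.Icc (v z₁) (v t) := ⟨hz₁.le, hvt.le⟩
  obtain ⟨s, hsI, hvs⟩ := intermediate_value_Icc' ht2.le hcont.continuousOn h0'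
  have hsS : s ∈ S := ⟨⟨le_trans hz₂S.1.1 (le_trans ht1.le hsI.1), hsI.2⟩, hvs⟩
  have : s ≤ z₂ := le_csSup (hScomp.bddAbove) hsS
  linarith [lt_of_lt_of_le ht1 hsI.1]

/-- No eigenvalues of the linearised F-KPP operator with nonzero imaginary part:
for `Im λ ≠ 0` there is no solution of the Riccati equation
`η' = (λ − 1 + 2û)/δ − (c/δ)η − η²` connecting `μ₋ᵘ(λ)` at `−∞` to `μ₊ˢ(λ)` at `+∞`,
where the `μ`'s are defined via the principal square root. -/
theorem fkpp_no_complex_eigenvalues (δ c : ℝ) (hδ : 0 < δ) (hc : 0 < c)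
    (u : ℝ → ℝ) (hu : Continuous u) (lam : ℂ) (hlam : lam.im ≠ 0) :
    ¬ ∃ η : ℝ → ℂ,
      (∀ z : ℝ, HasDerivAt η
        ((lam - 1 + 2 * (u z : ℂ)) / (δ : ℂ) - ((c : ℂ) / (δ : ℂ)) * η z - (η z)^2) z) ∧
      Tendsto η atBot
        (nhds ((-(c : ℂ) + ((c : ℂ)^2 + 4*(δ : ℂ)*(lam + 1)) ^ ((1 : ℂ)/2)) / (2*(δ : ℂ)))) ∧
      Tendsto η atTop
        (nhds ((-(c : ℂ) - ((c : ℂ)^2 + 4*(δ : ℂ)*(lam - 1)) ^ ((1 : ℂ)/2)) / (2*(δ : ℂ)))) := by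
  rintro ⟨η, hode, hbot, htop⟩
  set s₁ : ℂ := ((c : ℂ)^2 + 4*(δ : ℂ)*(lam + 1)) ^ ((1 : ℂ)/2) with hs₁
  set s₂ : ℂ := ((c : ℂ)^2 + 4*(δ : ℂ)*(lam - 1)) ^ ((1 : ℂ)/2) with hs₂
  -- imaginary parts of the radicands
  have hrad₁ : ((c:ℂ)^2 + 4*(δ:ℂ)*(lam + 1)).im = 4*δ*lam.im := by
    simp [Complex.add_im, Complex.mul_im, Complex.mul_re, Complex.ofReal_im, Complex.ofReal_re,
      pow_two]
  have hrad₂ : ((c:ℂ)^2 + 4*(δ:ℂ)*(lam - 1)).im = 4*δ*lam.im := by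
    simp [Complex.add_im, Complex.sub_im, Complex.mul_im, Complex.mul_re, Complex.ofReal_im,
      Complex.ofReal_re, pow_two]
  -- imaginary parts of the limits
  have hμm : ((-(c : ℂ) + s₁) / (2*(δ : ℂ))).im = s₁.im / (2*δ) := by
    simp [Complex.div_im, Complex.add_im, Complex.neg_im, Complex.ofReal_im, Complex.mul_im,
      Complex.mul_re, Complex.ofReal_re, Complex.normSq_apply]
    field_simp
  have hμp : ((-(c : ℂ) - s₂) / (2*(δ : ℂ))).im = -s₂.im / (2*δ) := by
    simp [Complex.div_im, Complex.sub_im, Complex.neg_im, Complex.ofReal_im, Complex.mul_im,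
      Complex.mul_re, Complex.ofReal_re, Complex.normSq_apply]
    field_simp
  -- the imaginary part of η
  set v : ℝ → ℝ := fun z => (η z).im with hv
  set g : ℝ → ℝ := fun z =>
    ((lam - 1 + 2 * (u z : ℂ)) / (δ : ℂ) - ((c : ℂ) / (δ : ℂ)) * η z - (η z)^2).im with hgdef
  have hd : ∀ z, HasDerivAt v (g z) z := fun z => by
    have h := Complex.imCLM.hasFDerivAt.comp_hasDerivAt z (hode z)
    simpa only [Complex.imCLM_apply, Function.comp_def] using h
  have hg0 : ∀ z, v z = 0 → g z = lam.im / δ := by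
    intro z hz
    have hw : (η z).im = 0 := hz
    simp only [hgdef]
    simp [Complex.sub_im, Complex.div_im, Complex.add_im, Complex.mul_im, Complex.mul_re,
      Complex.ofReal_re, Complex.ofReal_im, Complex.normSq_apply, pow_two, hw]
    field_simp
  have hvbot : Tendsto v atBot (nhds (((-(c : ℂ) + s₁) / (2*(δ : ℂ))).im)) :=
    (Complex.continuous_im.tendsto _).comp hbot
  have hvtop : Tendsto v atTop (nhds (((-(c : ℂ) - s₂) / (2*(δ : ℂ))).im)) :=
    (Complex.continuous_im.tendsto _).comp htop
  rcases hlam.lt_or_gt with hneg | hpos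
  · -- lam.im < 0 : apply no_crossing to -v
    have h₁ : s₁.im < 0 := im_cpow_half_neg (by rw [hrad₁]; nlinarith)
    have h₂ : s₂.im < 0 := im_cpow_half_neg (by rw [hrad₂]; nlinarith)
    refine no_crossing (fun z => -(v z)) (fun z => -(g z))
      (fun z => (hd z).neg) (fun z hz => ?_)
      (-(((-(c : ℂ) + s₁) / (2*(δ : ℂ))).im)) (-(((-(c : ℂ) - s₂) / (2*(δ : ℂ))).im))
      ?_ ?_ (hvbot.neg) (hvtop.neg)
    · have hvz : v z = 0 := by simpa using hz
      show 0 < -(g z)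
      rw [hg0 z hvz]
      have : lam.im / δ < 0 := div_neg_of_neg_of_pos hneg hδ
      linarith
    · rw [hμm]
      have : s₁.im / (2*δ) < 0 := div_neg_of_neg_of_pos h₁ (by positivity)
      linarith
    · rw [hμp]
      have : 0 < -s₂.im / (2*δ) := div_pos (by linarith) (by positivity)
      linarith
  · -- lam.im > 0 : apply no_crossing to v
    have h₁ : 0 < s₁.im := im_cpow_half_pos (by rw [hrad₁]; nlinarith)
    have h₂ : 0 < s₂.im := im_cpow_half_pos (by rw [hrad₂]; nlinarith)
    refine no_crossing v g hd (fun z hz => ?_)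
      ((((-(c : ℂ) + s₁) / (2*(δ : ℂ))).im)) ((((-(c : ℂ) - s₂) / (2*(δ : ℂ))).im))
      ?_ ?_ hvbot hvtop
    · rw [hg0 z hz]; positivity
    · rw [hμm]; positivity
    · rw [hμp]
      have h3 : 0 < s₂.im / (2*δ) := by positivity
      rw [neg_div]
      linarith
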